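/- arXiv:1709.07270 — 6 statements merged into one kernel-verified Lean document; each statement's English description precedes it below -/
import Mathlib

section
/- Let G(s) = C (sE - A)⁻¹ B be the transfer function of a full-order model and G_r(s) = C_r (sE_r - A_r)⁻¹ B_r the transfer function of the reduced model obtained by the Petrov-Galerkin projection E_r = WᵀEV, A_r = WᵀAV, B_r = WᵀB, C_r = CV. Suppose σ ∈ ℂ and r ∈ ℂ^m are such that sE - A and sE_r - A_r are invertible at s = σ, and (A - σE)⁻¹ B r lies in the column space of V. Then G(σ) r = G_r(σ) r. -/
open Matrix

theorem right_tangential_interpolation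
    {n m p q : ℕ} (A E : Matrix (Fin n) (Fin n) ℂ)
    (B : Matrix (Fin n) (Fin m) ℂ) (C : Matrix (Fin p) (Fin n) ℂ)
    (V W : Matrix (Fin n) (Fin q) ℂ)
    (σ : ℂ) (r : Fin m → ℂ)
    (hfull : IsUnit (σ • E - A))
    (hred : IsUnit (σ • (Wᵀ * E * V) - Wᵀ * A * V))
    (hmem : ∃ z : Fin q → ℂ, V *ᵥ z = (A - σ • E)⁻¹ *ᵥ (B *ᵥ r)) :
    (C * (σ • E - A)⁻¹ * B) *ᵥ r
      = ((C * V) * (σ • (Wᵀ * E * V) - Wᵀ * A * V)⁻¹ * (Wᵀ * B)) *ᵥ r := by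
  obtain ⟨z, hz⟩ := hmem
  set K := σ • E - A with hKdef
  set Kr := σ • (Wᵀ * E * V) - Wᵀ * A * V with hKrdef
  have hKdet : IsUnit K.det := (Matrix.isUnit_iff_isUnit_det K).mp hfull
  have hKrdet : IsUnit Kr.det := (Matrix.isUnit_iff_isUnit_det Kr).mp hred
  have hKr : Kr = Wᵀ * K * V := by
    simp [hKrdef, hKdef, Matrix.mul_sub, Matrix.sub_mul, Matrix.mul_smul,
      Matrix.smul_mul]
  have hneg : (A - σ • E)⁻¹ = -K⁻¹ := by
    have h1 : A - σ • E = -K := by simp [hKdef]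
    rw [h1]
    apply Matrix.inv_eq_right_inv
    rw [Matrix.neg_mul, Matrix.mul_neg, neg_neg, Matrix.mul_nonsing_inv K hKdet]
  have hz' : V *ᵥ z = -(K⁻¹ *ᵥ (B *ᵥ r)) := by
    rw [hz, hneg, Matrix.neg_mulVec]
  have hKVz : K *ᵥ (V *ᵥ z) = -(B *ᵥ r) := by
    rw [hz', Matrix.mulVec_neg, Matrix.mulVec_mulVec,
      Matrix.mul_nonsing_inv K hKdet, Matrix.one_mulVec]
  have hKrz : Kr *ᵥ z = -(Wᵀ *ᵥ (B *ᵥ r)) := by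
    rw [hKr, ← Matrix.mulVec_mulVec, ← Matrix.mulVec_mulVec, hKVz,
      Matrix.mulVec_neg]
  have hinvKr : Kr⁻¹ *ᵥ ((Wᵀ * B) *ᵥ r) = -z := by
    have h2 : Kr⁻¹ *ᵥ (Kr *ᵥ z) = z := by
      rw [Matrix.mulVec_mulVec, Matrix.nonsing_inv_mul Kr hKrdet,
        Matrix.one_mulVec]
    have h3 : Wᵀ *ᵥ (B *ᵥ r) = -(Kr *ᵥ z) := by rw [hKrz, neg_neg]
    rw [← Matrix.mulVec_mulVec, h3, Matrix.mulVec_neg, h2]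
  calc (C * K⁻¹ * B) *ᵥ r = C *ᵥ (K⁻¹ *ᵥ (B *ᵥ r)) := by
        rw [← Matrix.mulVec_mulVec, ← Matrix.mulVec_mulVec]
    _ = C *ᵥ (-(V *ᵥ z)) := by rw [hz', neg_neg]
    _ = (C * V) *ᵥ (-z) := by
        simp [Matrix.mulVec_neg, Matrix.mulVec_mulVec]
    _ = (C * V) *ᵥ (Kr⁻¹ *ᵥ ((Wᵀ * B) *ᵥ r)) := by rw [hinvKr]
    _ = ((C * V) * Kr⁻¹ * (Wᵀ * B)) *ᵥ r := by
        simp [Matrix.mulVec_mulVec, Matrix.mul_assoc]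
end

section
/- Let G(s) = C (sE - A)⁻¹ B and let G_r be obtained by Petrov-Galerkin projection with matrices V, W ∈ ℂ^{n×q}. Suppose σ ∈ ℂ and l ∈ ℂ^p are such that σE - A and σE_r - A_r are invertible and (A - σE)⁻ᵀ Cᵀ l lies in the column space of W. Then lᵀ G(σ) = lᵀ G_r(σ). -/
open Matrix

theorem left_tangential_interpolation
    {n m p q : ℕ} (A E : Matrix (Fin n) (Fin n) ℂ)
    (B : Matrix (Fin n) (Fin m) ℂ) (C : Matrix (Fin p) (Fin n) ℂ)
    (V W : Matrix (Fin n) (Fin q) ℂ)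
    (σ : ℂ) (l : Fin p → ℂ)
    (hfull : IsUnit (σ • E - A))
    (hred : IsUnit (σ • (Wᵀ * E * V) - Wᵀ * A * V))
    (hmem : ∃ z : Fin q → ℂ, W *ᵥ z = ((A - σ • E)⁻¹)ᵀ *ᵥ (Cᵀ *ᵥ l)) :
    l ᵥ* (C * (σ • E - A)⁻¹ * B)
      = l ᵥ* ((C * V) * (σ • (Wᵀ * E * V) - Wᵀ * A * V)⁻¹ * (Wᵀ * B)) := by
  obtain ⟨z, hz⟩ := hmem
  set K : Matrix (Fin n) (Fin n) ℂ := σ • E - A with hK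
  set Kr : Matrix (Fin q) (Fin q) ℂ := σ • (Wᵀ * E * V) - Wᵀ * A * V with hKr
  have hKd : IsUnit K.det := (Matrix.isUnit_iff_isUnit_det _).mp hfull
  have hKrd : IsUnit Kr.det := (Matrix.isUnit_iff_isUnit_det _).mp hred
  have hKinv : K⁻¹ * K = 1 := Matrix.nonsing_inv_mul K hKd
  have hKrinv : Kr * Kr⁻¹ = 1 := Matrix.mul_nonsing_inv Kr hKrd
  have hKrK : Kr = Wᵀ * K * V := by
    simp [hKr, hK, Matrix.mul_sub, Matrix.sub_mul, Matrix.mul_smul, Matrix.smul_mul]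
  have hneg : (A - σ • E)⁻¹ = -(K⁻¹) := by
    have h1 : A - σ • E = -K := by simp [hK]
    rw [h1]
    apply Matrix.inv_eq_right_inv
    rw [neg_mul_neg, Matrix.mul_nonsing_inv K hKd]
  have hz' : z ᵥ* Wᵀ = -(l ᵥ* C ᵥ* K⁻¹) := by
    rw [Matrix.vecMul_transpose, hz, hneg, Matrix.mulVec_transpose, Matrix.mulVec_transpose]
    simp [Matrix.vecMul_vecMul, Matrix.vecMul_neg]
  have hlC : l ᵥ* C = -(z ᵥ* Wᵀ) ᵥ* K := by
    have h2 := congrArg (fun v => v ᵥ* K) hz'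
    simp only [Matrix.neg_vecMul] at h2 ⊢
    rw [h2, Matrix.vecMul_vecMul, Matrix.vecMul_vecMul, hKinv]
    simp
  have hlCV : l ᵥ* C ᵥ* V = -(z ᵥ* Kr) := by
    rw [hlC, hKrK]
    simp [Matrix.neg_vecMul, Matrix.vecMul_vecMul, Matrix.mul_assoc]
  calc l ᵥ* (C * K⁻¹ * B) = (l ᵥ* C ᵥ* K⁻¹) ᵥ* B := by
        simp [← Matrix.vecMul_vecMul]
    _ = -(z ᵥ* Wᵀ) ᵥ* B := by
        rw [← neg_neg (l ᵥ* C ᵥ* K⁻¹), ← hz']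
    _ = (l ᵥ* C ᵥ* V ᵥ* Kr⁻¹) ᵥ* (Wᵀ * B) := by
        rw [hlCV]
        simp [Matrix.neg_vecMul, Matrix.vecMul_vecMul, ← Matrix.mul_assoc, hKrinv]
    _ = l ᵥ* ((C * V) * Kr⁻¹ * (Wᵀ * B)) := by
        simp [← Matrix.vecMul_vecMul]
end

section
/- Let G(s) = C (sE - A)⁻¹ B and let G_r be obtained by Petrov-Galerkin projection with matrices V, W ∈ ℂ^{n×q}. Suppose σ ∈ ℂ, r ∈ ℂ^m, l ∈ ℂ^p are such that σE - A and σE_r - A_r are invertible, (A - σE)⁻¹ B r ∈ range(V), and (A - σE)⁻ᵀ Cᵀ l ∈ range(W). Then in addition to G(σ)r = G_r(σ)r and lᵀG(σ) = lᵀG_r(σ), the derivatives match tangentially: lᵀ G'(σ) r = lᵀ G_r'(σ) r, where G'(s) = -C (sE - A)⁻¹ E (sE - A)⁻¹ B. -/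
open Matrix

theorem bitangential_hermite_interpolation
    {n m p q : ℕ} (A E : Matrix (Fin n) (Fin n) ℂ)
    (B : Matrix (Fin n) (Fin m) ℂ) (C : Matrix (Fin p) (Fin n) ℂ)
    (V W : Matrix (Fin n) (Fin q) ℂ)
    (σ : ℂ) (r : Fin m → ℂ) (l : Fin p → ℂ)
    (hfull : IsUnit (σ • E - A))
    (hred : IsUnit (σ • (Wᵀ * E * V) - Wᵀ * A * V))
    (hmemV : ∃ z : Fin q → ℂ, V *ᵥ z = (A - σ • E)⁻¹ *ᵥ (B *ᵥ r))
    (hmemW : ∃ z : Fin q → ℂ, W *ᵥ z = ((A - σ • E)⁻¹)ᵀ *ᵥ (Cᵀ *ᵥ l)) :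
    (C * (σ • E - A)⁻¹ * B) *ᵥ r
        = ((C * V) * (σ • (Wᵀ * E * V) - Wᵀ * A * V)⁻¹ * (Wᵀ * B)) *ᵥ r
    ∧ l ᵥ* (C * (σ • E - A)⁻¹ * B)
        = l ᵥ* ((C * V) * (σ • (Wᵀ * E * V) - Wᵀ * A * V)⁻¹ * (Wᵀ * B))
    ∧ l ⬝ᵥ ((-(C * (σ • E - A)⁻¹ * E * (σ • E - A)⁻¹ * B)) *ᵥ r)
        = l ⬝ᵥ ((-((C * V) * (σ • (Wᵀ * E * V) - Wᵀ * A * V)⁻¹ * (Wᵀ * E * V)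
            * (σ • (Wᵀ * E * V) - Wᵀ * A * V)⁻¹ * (Wᵀ * B))) *ᵥ r) := by
  set K := σ • E - A with hK
  have hKr_eq : σ • (Wᵀ * E * V) - Wᵀ * A * V = Wᵀ * K * V := by
    simp only [hK, Matrix.mul_sub, Matrix.sub_mul, Matrix.mul_smul, Matrix.smul_mul]
  rw [hKr_eq] at hred ⊢
  set Kr := Wᵀ * K * V with hKr
  have hdK : IsUnit K.det := (Matrix.isUnit_iff_isUnit_det _).mp hfull
  have hdKr : IsUnit Kr.det := (Matrix.isUnit_iff_isUnit_det _).mp hred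
  have hdKT : IsUnit Kᵀ.det := by rwa [Matrix.det_transpose]
  have hdKrT : IsUnit Krᵀ.det := by rwa [Matrix.det_transpose]
  have hndK : IsUnit (-K).det := (Matrix.isUnit_iff_isUnit_det _).mp hfull.neg
  have hndKT : IsUnit (-Kᵀ).det :=
    (Matrix.isUnit_iff_isUnit_det _).mp ((Matrix.isUnit_iff_isUnit_det _).mpr hdKT).neg
  have hAE : A - σ • E = -K := by rw [hK]; abel
  have hm : K * (-K)⁻¹ = -1 := by
    calc K * (-K)⁻¹ = -(-K * (-K)⁻¹) := by rw [Matrix.neg_mul, neg_neg]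
      _ = -1 := by rw [Matrix.mul_nonsing_inv _ hndK]
  have hmT : Kᵀ * (-Kᵀ)⁻¹ = -1 := by
    calc Kᵀ * (-Kᵀ)⁻¹ = -(-Kᵀ * (-Kᵀ)⁻¹) := by rw [Matrix.neg_mul, neg_neg]
      _ = -1 := by rw [Matrix.mul_nonsing_inv _ hndKT]
  -- construct v with K *ᵥ (V *ᵥ v) = B *ᵥ r
  obtain ⟨z, hz⟩ := hmemV
  rw [hAE] at hz
  have hv : K *ᵥ (V *ᵥ (-z)) = B *ᵥ r := by
    rw [Matrix.mulVec_neg, Matrix.mulVec_neg, hz, Matrix.mulVec_mulVec, hm,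
      Matrix.neg_mulVec, Matrix.one_mulVec, neg_neg]
  set v := -z with hvdef
  -- construct w with Kᵀ *ᵥ (W *ᵥ w) = Cᵀ *ᵥ l
  obtain ⟨y, hy⟩ := hmemW
  rw [hAE, Matrix.transpose_nonsing_inv, Matrix.transpose_neg] at hy
  have hw : Kᵀ *ᵥ (W *ᵥ (-y)) = Cᵀ *ᵥ l := by
    rw [Matrix.mulVec_neg, Matrix.mulVec_neg, hy, Matrix.mulVec_mulVec, hmT,
      Matrix.neg_mulVec, Matrix.one_mulVec, neg_neg]
  set w := -y with hwdef
  -- key cancellation facts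
  have hvK : K⁻¹ *ᵥ (B *ᵥ r) = V *ᵥ v := by
    rw [← hv, Matrix.mulVec_mulVec, Matrix.nonsing_inv_mul _ hdK, Matrix.one_mulVec]
  have hvr : Kr⁻¹ *ᵥ (Wᵀ *ᵥ (B *ᵥ r)) = v := by
    have hKrv : Kr *ᵥ v = Wᵀ *ᵥ (B *ᵥ r) := by
      rw [hKr, ← Matrix.mulVec_mulVec, ← Matrix.mulVec_mulVec, hv]
    rw [← hKrv, Matrix.mulVec_mulVec, Matrix.nonsing_inv_mul _ hdKr, Matrix.one_mulVec]
  have hwK : (Kᵀ)⁻¹ *ᵥ (Cᵀ *ᵥ l) = W *ᵥ w := by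
    rw [← hw, Matrix.mulVec_mulVec, Matrix.nonsing_inv_mul _ hdKT, Matrix.one_mulVec]
  have hwr : (Krᵀ)⁻¹ *ᵥ (Vᵀ *ᵥ (Cᵀ *ᵥ l)) = w := by
    have hKrw : Krᵀ *ᵥ w = Vᵀ *ᵥ (Cᵀ *ᵥ l) := by
      rw [hKr, Matrix.transpose_mul, Matrix.transpose_mul, Matrix.transpose_transpose,
        ← Matrix.mulVec_mulVec, ← Matrix.mulVec_mulVec, hw]
    rw [← hKrw, Matrix.mulVec_mulVec, Matrix.nonsing_inv_mul _ hdKrT, Matrix.one_mulVec]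
  refine ⟨?_, ?_, ?_⟩
  · -- right tangential interpolation
    simp only [← Matrix.mulVec_mulVec]
    rw [hvK, hvr]
  · -- left tangential interpolation
    rw [← Matrix.mulVec_transpose, ← Matrix.mulVec_transpose]
    simp only [Matrix.transpose_mul, Matrix.transpose_nonsing_inv, Matrix.transpose_transpose]
    simp only [← Matrix.mulVec_mulVec]
    rw [hwK, hwr]
  · -- Hermite (derivative) interpolation
    simp only [Matrix.neg_mulVec, dotProduct_neg, neg_inj]
    have hlCK : l ᵥ* (C * K⁻¹) = W *ᵥ w := by
      rw [← Matrix.mulVec_transpose, Matrix.transpose_mul, Matrix.transpose_nonsing_inv,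
        ← Matrix.mulVec_mulVec, hwK]
    have hlCVKr : l ᵥ* (C * V * Kr⁻¹) = w := by
      rw [← Matrix.mulVec_transpose]
      simp only [Matrix.transpose_mul, Matrix.transpose_nonsing_inv, ← Matrix.mulVec_mulVec]
      rw [hwr]
    have hstep : ∀ x : Fin n → ℂ, w ⬝ᵥ (Wᵀ *ᵥ x) = (W *ᵥ w) ⬝ᵥ x := by
      intro x; rw [Matrix.dotProduct_mulVec, Matrix.vecMul_transpose]
    calc l ⬝ᵥ ((C * K⁻¹ * E * K⁻¹ * B) *ᵥ r)
        = l ⬝ᵥ ((C * K⁻¹) *ᵥ (E *ᵥ (K⁻¹ *ᵥ (B *ᵥ r)))) := by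
          simp only [Matrix.mulVec_mulVec, Matrix.mul_assoc]
      _ = (l ᵥ* (C * K⁻¹)) ⬝ᵥ (E *ᵥ (V *ᵥ v)) := by
          rw [hvK, Matrix.dotProduct_mulVec]
      _ = (W *ᵥ w) ⬝ᵥ (E *ᵥ (V *ᵥ v)) := by rw [hlCK]
      _ = w ⬝ᵥ (Wᵀ *ᵥ (E *ᵥ (V *ᵥ v))) := (hstep _).symm
      _ = (l ᵥ* (C * V * Kr⁻¹)) ⬝ᵥ ((Wᵀ * E * V) *ᵥ v) := by
          rw [hlCVKr]
          simp only [← Matrix.mulVec_mulVec]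
      _ = l ⬝ᵥ ((C * V * Kr⁻¹) *ᵥ ((Wᵀ * E * V) *ᵥ v)) :=
          (Matrix.dotProduct_mulVec _ _ _).symm
      _ = l ⬝ᵥ ((C * V * Kr⁻¹ * (Wᵀ * E * V) * Kr⁻¹ * (Wᵀ * B)) *ᵥ r) := by
          congr 1
          simp only [← Matrix.mulVec_mulVec]
          rw [hvr]
end

section
/- Let G(s) = c^T (sE - A)⁻¹ b be a SISO transfer function (b, c ∈ ℂ^n). Suppose σ ∈ ℂ with A - σE invertible, and let V ∈ ℂ^{n×k} have column space containing the Krylov subspace span{v₁, …, v_k} where v₁ = (A - σE)⁻¹ b and v_{j+1} = (A - σE)⁻¹ E v_j. Let G_r be obtained via one-sided projection with W = V (assuming V^T E V and σE_r - A_r invertible). Then G^{(i)}(σ) = G_r^{(i)}(σ) for i = 0, …, k-1. -/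
open Matrix

/-- SISO moment matching at a single shift σ: if the projection subspace contains the
rational Krylov subspace of order `k`, the value and first `k-1` derivatives of the
transfer function are matched. Derivatives are expressed via
`G⁽ⁱ⁾(σ) = (-1)^i i! cᵀ ((σE-A)⁻¹E)^i (σE-A)⁻¹ b`. -/
theorem siso_moment_matching
    {n k : ℕ} (A E : Matrix (Fin n) (Fin n) ℂ) (b c : Fin n → ℂ)
    (σ : ℂ) (hinv : IsUnit (A - σ • E))
    {q : ℕ} (V : Matrix (Fin n) (Fin q) ℂ)
    (hredE : IsUnit (σ • (Vᵀ * E * V) - Vᵀ * A * V))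
    (v : ℕ → Fin n → ℂ)
    (hv0 : v 0 = (A - σ • E)⁻¹ *ᵥ b)
    (hvsucc : ∀ j, v (j + 1) = (A - σ • E)⁻¹ *ᵥ (E *ᵥ v j))
    (hspan : ∀ j < k, ∃ z : Fin q → ℂ, V *ᵥ z = v j) :
    ∀ i < k,
      ((-1 : ℂ) ^ i * (Nat.factorial i)) •
        (c ⬝ᵥ (((σ • E - A)⁻¹ * E) ^ i *ᵥ ((σ • E - A)⁻¹ *ᵥ b)))
      = ((-1 : ℂ) ^ i * (Nat.factorial i)) •
        ((Vᵀ *ᵥ c) ⬝ᵥ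
          (((σ • (Vᵀ * E * V) - Vᵀ * A * V)⁻¹ * (Vᵀ * E * V)) ^ i *ᵥ
            ((σ • (Vᵀ * E * V) - Vᵀ * A * V)⁻¹ *ᵥ (Vᵀ *ᵥ b)))) := by
  set M : Matrix (Fin n) (Fin n) ℂ := σ • E - A with hMdef
  set Er : Matrix (Fin q) (Fin q) ℂ := Vᵀ * E * V with hErdef
  set Mr : Matrix (Fin q) (Fin q) ℂ := σ • (Vᵀ * E * V) - Vᵀ * A * V with hMrdef
  have hM : IsUnit M := by rw [hMdef, ← neg_sub]; exact hinv.neg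
  have hMd := (Matrix.isUnit_iff_isUnit_det M).mp hM
  have hMrd := (Matrix.isUnit_iff_isUnit_det Mr).mp hredE
  have hMcancel : ∀ x : Fin n → ℂ, M *ᵥ (M⁻¹ *ᵥ x) = x := fun x => by
    rw [Matrix.mulVec_mulVec, Matrix.mul_nonsing_inv _ hMd, Matrix.one_mulVec]
  have hMrcancel : ∀ x : Fin q → ℂ, Mr⁻¹ *ᵥ (Mr *ᵥ x) = x := fun x => by
    rw [Matrix.mulVec_mulVec, Matrix.nonsing_inv_mul _ hMrd, Matrix.one_mulVec]
  have hnegM : A - σ • E = -M := by rw [hMdef, neg_sub]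
  have hinvneg : (A - σ • E)⁻¹ = -M⁻¹ := by
    apply Matrix.inv_eq_right_inv
    rw [hnegM, neg_mul_neg, Matrix.mul_nonsing_inv _ hMd]
  -- the (sign-flipped) moment vectors
  set u : ℕ → Fin n → ℂ := fun j => (M⁻¹ * E) ^ j *ᵥ (M⁻¹ *ᵥ b) with hudef
  set ur : ℕ → Fin q → ℂ := fun j => (Mr⁻¹ * Er) ^ j *ᵥ (Mr⁻¹ *ᵥ (Vᵀ *ᵥ b)) with hurdef
  have hu0 : u 0 = M⁻¹ *ᵥ b := by simp [hudef]
  have husucc : ∀ j, u (j + 1) = M⁻¹ *ᵥ (E *ᵥ u j) := by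
    intro j
    simp only [hudef, pow_succ']
    rw [← Matrix.mulVec_mulVec, ← Matrix.mulVec_mulVec]
  have hursucc : ∀ j, ur (j + 1) = Mr⁻¹ *ᵥ (Er *ᵥ ur j) := by
    intro j
    simp only [hurdef, pow_succ']
    rw [← Matrix.mulVec_mulVec, ← Matrix.mulVec_mulVec]
  -- relation between u and v
  have huv : ∀ j, u j = (-1 : ℂ) ^ (j + 1) • v j := by
    intro j
    induction j with
    | zero =>
      rw [hu0, hv0, hinvneg, Matrix.neg_mulVec]
      simp
    | succ j ih =>
      rw [husucc, hvsucc, hinvneg, ih]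
      simp [Matrix.mulVec_smul, Matrix.mulVec_neg, Matrix.neg_mulVec, pow_succ, smul_smul]
  have hMrV : Mr = Vᵀ * M * V := by
    rw [hMrdef, hMdef, Matrix.mul_sub, Matrix.sub_mul, Matrix.mul_smul, Matrix.smul_mul]
  -- span hypothesis for u
  have hspanu : ∀ j < k, ∃ z : Fin q → ℂ, V *ᵥ z = u j := by
    intro j hj
    obtain ⟨z, hz⟩ := hspan j hj
    exact ⟨(-1 : ℂ) ^ (j + 1) • z, by rw [Matrix.mulVec_smul, hz, huv]⟩
  -- key: V maps reduced moments to full moments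
  have key : ∀ j < k, V *ᵥ ur j = u j := by
    intro j
    induction j with
    | zero =>
      intro hj
      obtain ⟨z, hz⟩ := hspanu 0 hj
      have hz' : Mr *ᵥ z = Vᵀ *ᵥ b := by
        rw [hMrV, ← Matrix.mulVec_mulVec, ← Matrix.mulVec_mulVec, hz, hu0, hMcancel]
      have : ur 0 = z := by
        have : Mr⁻¹ *ᵥ (Mr *ᵥ z) = z := hMrcancel z
        rw [hz'] at this
        simpa [hurdef] using this
      rw [this, hz]
    | succ j ih =>
      intro hj
      have hjk : j < k := Nat.lt_of_succ_lt hj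
      obtain ⟨z, hz⟩ := hspanu (j + 1) hj
      have hz' : Mr *ᵥ z = Er *ᵥ ur j := by
        rw [hMrV, ← Matrix.mulVec_mulVec, ← Matrix.mulVec_mulVec, hz, husucc, hMcancel,
          hErdef, ← Matrix.mulVec_mulVec, ← Matrix.mulVec_mulVec, ih hjk]
      have : ur (j + 1) = z := by
        have h2 : Mr⁻¹ *ᵥ (Mr *ᵥ z) = z := hMrcancel z
        rw [hz'] at h2
        rw [hursucc, h2]
      rw [this, hz]
  intro i hik
  congr 1
  show c ⬝ᵥ u i = (Vᵀ *ᵥ c) ⬝ᵥ ur i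
  rw [← key i hik, Matrix.mulVec_transpose, Matrix.dotProduct_mulVec]
end

section
/- Under the assumptions of the model-function optimality theorem, let additionally V, W ∈ ℂ^{n×q} satisfy A V - E V S* - B R* = 0 and Aᵀ W - Eᵀ W S* - Cᵀ L* = 0 (primitive bases at the optimal data), where the optimal frequencies σ*ᵢ are distinct and A - σ*ᵢE invertible. If the update condition holds and the composed bases are primitive, then V = V_M V_Mr and W = W_M W_Mr, and consequently the directly projected reduced model Σ_r = Wᵀ Σ V equals the two-stage reduced model Σ_Mr = W_Mrᵀ (W_Mᵀ Σ V_M) V_Mr. -/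
open Matrix

private lemma mulVec_cancel {N : ℕ} {M : Matrix (Fin N) (Fin N) ℂ} (h : IsUnit M)
    {x y : Fin N → ℂ} (hxy : M.mulVec x = M.mulVec y) : x = y := by
  have hd : IsUnit M.det := (Matrix.isUnit_iff_isUnit_det M).mp h
  have := congrArg (M⁻¹.mulVec) hxy
  simpa [Matrix.mulVec_mulVec, Matrix.nonsing_inv_mul M hd, Matrix.one_mulVec] using this

private lemma sylv_col {N Q R : ℕ} (A E : Matrix (Fin N) (Fin N) ℂ)
    (B : Matrix (Fin N) (Fin R) ℂ) (σ : Fin Q → ℂ) (r : Fin Q → Fin R → ℂ)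
    (V : Matrix (Fin N) (Fin Q) ℂ)
    (h : A * V - E * V * Matrix.diagonal σ - B * (Matrix.of fun k i => r i k) = 0)
    (i : Fin Q) :
    (A - σ i • E).mulVec (fun k => V k i) = B.mulVec (r i) := by
  funext k
  have h2 := congrFun (congrFun h k) i
  simp only [Matrix.sub_apply, Matrix.zero_apply, Matrix.mul_diagonal, sub_eq_zero] at h2
  simp only [Matrix.mul_apply, Matrix.of_apply] at h2
  simp only [Matrix.mulVec, Matrix.sub_apply, Matrix.smul_apply, dotProduct, smul_eq_mul,
    sub_mul]
  rw [Finset.sum_sub_distrib]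
  have h3 : ∑ l, σ i * E k l * V l i = (∑ l, E k l * V l i) * σ i := by
    rw [Finset.sum_mul]; congr 1; funext l; ring
  rw [h3]
  exact h2

private lemma isUnit_transpose' {N : ℕ} {M : Matrix (Fin N) (Fin N) ℂ} (h : IsUnit M) :
    IsUnit Mᵀ := by
  rw [Matrix.isUnit_iff_isUnit_det, Matrix.det_transpose]
  exact (Matrix.isUnit_iff_isUnit_det M).mp h
/-- Composition corollary of the model-function framework: the primitive bases at the
optimal data factor through the model-function bases, hence the directly projected
reduced model coincides with the two-stage reduced model. -/
theorem model_function_composition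
    {n nM q m p : ℕ}
    (A E : Matrix (Fin n) (Fin n) ℂ)
    (B : Matrix (Fin n) (Fin m) ℂ) (C : Matrix (Fin p) (Fin n) ℂ)
    -- model function interpolation data and primitive bases
    (σM : Fin nM → ℂ) (rM : Fin nM → Fin m → ℂ) (lM : Fin nM → Fin p → ℂ)
    (VM WM : Matrix (Fin n) (Fin nM) ℂ)
    (hVM : A * VM - E * VM * Matrix.diagonal σM - B * (Matrix.of fun k i => rM i k) = 0)
    (hWM : Aᵀ * WM - Eᵀ * WM * Matrix.diagonal σM - Cᵀ * (Matrix.of fun k i => lM i k) = 0)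
    -- the model function Σ_M = W_Mᵀ Σ V_M
    (AM EM : Matrix (Fin nM) (Fin nM) ℂ)
    (BM : Matrix (Fin nM) (Fin m) ℂ) (CM : Matrix (Fin p) (Fin nM) ℂ)
    (hAM : AM = WMᵀ * A * VM) (hEM : EM = WMᵀ * E * VM)
    (hBM : BM = WMᵀ * B) (hCM : CM = C * VM)
    -- optimal interpolation data and primitive bases for Σ_M
    (σO : Fin q → ℂ) (rO : Fin q → Fin m → ℂ) (lO : Fin q → Fin p → ℂ)
    (hdist : Function.Injective σO)
    (hinvFull : ∀ i, IsUnit (A - σO i • E))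
    (hinvM : ∀ i, IsUnit (AM - σO i • EM))
    (VMr WMr : Matrix (Fin nM) (Fin q) ℂ)
    (hVMr : AM * VMr - EM * VMr * Matrix.diagonal σO - BM * (Matrix.of fun k i => rO i k) = 0)
    (hWMr : AMᵀ * WMr - EMᵀ * WMr * Matrix.diagonal σO - CMᵀ * (Matrix.of fun k i => lO i k) = 0)
    -- update condition: every optimal triplet occurs among the model-function data
    (hupdate : ∀ i, ∃ j, σM j = σO i ∧ rM j = rO i ∧ lM j = lO i)
    -- primitive bases of the full-order model at the optimal data
    (V W : Matrix (Fin n) (Fin q) ℂ)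
    (hV : A * V - E * V * Matrix.diagonal σO - B * (Matrix.of fun k i => rO i k) = 0)
    (hW : Aᵀ * W - Eᵀ * W * Matrix.diagonal σO - Cᵀ * (Matrix.of fun k i => lO i k) = 0) :
    V = VM * VMr ∧ W = WM * WMr
    ∧ Wᵀ * E * V = WMrᵀ * (WMᵀ * E * VM) * VMr
    ∧ Wᵀ * A * V = WMrᵀ * (WMᵀ * A * VM) * VMr
    ∧ Wᵀ * B = WMrᵀ * (WMᵀ * B)
    ∧ C * V = (C * VM) * VMr := by

  -- column equations
  have hVcolF := sylv_col A E B σO rO V hV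
  have hVMcol := sylv_col A E B σM rM VM hVM
  have hVMrcol := sylv_col AM EM BM σO rO VMr hVMr
  have hWcolF := sylv_col Aᵀ Eᵀ Cᵀ σO lO W hW
  have hWMcol := sylv_col Aᵀ Eᵀ Cᵀ σM lM WM hWM
  have hWMrcol := sylv_col AMᵀ EMᵀ CMᵀ σO lO WMr hWMr
  have hfac : ∀ i : Fin q, AM - σO i • EM = WMᵀ * (A - σO i • E) * VM := by
    intro i
    rw [hAM, hEM]
    simp [Matrix.mul_sub, Matrix.sub_mul, Matrix.mul_smul, Matrix.smul_mul]
  have hfacT : ∀ i : Fin q, AMᵀ - σO i • EMᵀ = VMᵀ * (Aᵀ - σO i • Eᵀ) * WM := by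
    intro i
    have := congrArg Matrix.transpose (hfac i)
    simpa [Matrix.transpose_mul, Matrix.mul_assoc] using this
  have hcols : ∀ i : Fin q, (∀ k, V k i = (VM * VMr) k i) ∧ (∀ k, W k i = (WM * WMr) k i) := by
    intro i
    obtain ⟨j, hσ, hr, hl⟩ := hupdate i
    -- V side
    have hVMj : (A - σO i • E).mulVec (fun k => VM k j) = B.mulVec (rO i) := by
      rw [← hσ, ← hr]; exact hVMcol j
    have hVcol : (fun k => V k i) = fun k => VM k j :=
      mulVec_cancel (hinvFull i) (by rw [hVcolF i, hVMj])
    have e1 : (AM - σO i • EM).mulVec (Pi.single j 1) = BM.mulVec (rO i) := by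
      rw [hfac i, ← Matrix.mulVec_mulVec, ← Matrix.mulVec_mulVec, Matrix.mulVec_single]
      have : (MulOpposite.op (1:ℂ) • VM.col j : Fin n → ℂ) = fun k => VM k j := by funext k; simp
      rw [this, hVMj, Matrix.mulVec_mulVec, hBM]
    have e2 : (fun l => VMr l i) = Pi.single j 1 :=
      mulVec_cancel (hinvM i) (by rw [hVMrcol i, e1])
    -- W side
    have hTinv : IsUnit (Aᵀ - σO i • Eᵀ) := by
      have := isUnit_transpose' (hinvFull i)
      simpa [Matrix.transpose_sub, Matrix.transpose_smul] using this
    have hTMinv : IsUnit (AMᵀ - σO i • EMᵀ) := by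
      have := isUnit_transpose' (hinvM i)
      simpa [Matrix.transpose_sub, Matrix.transpose_smul] using this
    have hWMj : (Aᵀ - σO i • Eᵀ).mulVec (fun k => WM k j) = Cᵀ.mulVec (lO i) := by
      rw [← hσ, ← hl]; exact hWMcol j
    have hWcol : (fun k => W k i) = fun k => WM k j :=
      mulVec_cancel hTinv (by rw [hWcolF i, hWMj])
    have f1 : (AMᵀ - σO i • EMᵀ).mulVec (Pi.single j 1) = CMᵀ.mulVec (lO i) := by
      rw [hfacT i, ← Matrix.mulVec_mulVec, ← Matrix.mulVec_mulVec, Matrix.mulVec_single]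
      have : (MulOpposite.op (1:ℂ) • WM.col j : Fin n → ℂ) = fun k => WM k j := by funext k; simp
      rw [this, hWMj, Matrix.mulVec_mulVec, hCM]
      simp [Matrix.transpose_mul]
    have f2 : (fun l => WMr l i) = Pi.single j 1 :=
      mulVec_cancel hTMinv (by rw [hWMrcol i, f1])
    constructor
    · intro k
      rw [Matrix.mul_apply]
      have : ∀ l, VMr l i = (Pi.single j 1 : Fin nM → ℂ) l := fun l => by exact congrFun e2 l
      simp only [this, Pi.single_apply, mul_ite, mul_one, mul_zero]
      rw [Finset.sum_ite_eq' Finset.univ j (fun l => VM k l)]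
      simp [congrFun hVcol k]
    · intro k
      rw [Matrix.mul_apply]
      have : ∀ l, WMr l i = (Pi.single j 1 : Fin nM → ℂ) l := fun l => by exact congrFun f2 l
      simp only [this, Pi.single_apply, mul_ite, mul_one, mul_zero]
      rw [Finset.sum_ite_eq' Finset.univ j (fun l => WM k l)]
      simp [congrFun hWcol k]
  have hVeq : V = VM * VMr := by ext k i; exact (hcols i).1 k
  have hWeq : W = WM * WMr := by ext k i; exact (hcols i).2 k
  refine ⟨hVeq, hWeq, ?_, ?_, ?_, ?_⟩
  · rw [hVeq, hWeq]; simp [Matrix.transpose_mul, Matrix.mul_assoc]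
  · rw [hVeq, hWeq]; simp [Matrix.transpose_mul, Matrix.mul_assoc]
  · rw [hWeq]; simp [Matrix.transpose_mul, Matrix.mul_assoc]
  · rw [hVeq, Matrix.mul_assoc]
end

section
/- With Π = V (Wᵀ(A - σE)V)⁻¹ Wᵀ (A - σE) as above and G, G_r the full and reduced transfer functions, the interpolation error at σ factors as G(σ) - G_r(σ) = C (σE - A)⁻¹ (I - (A - σE)Π(A - σE)⁻¹)(A - σE)(I - Π)(A - σE)⁻¹ B · (-1)², and in particular if (A - σE)⁻¹ B r ∈ range(V) then (I - Π)(A - σE)⁻¹ B r = 0, which implies (G(σ) - G_r(σ)) r = 0. -/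
open Matrix

/-- Error factorization for projection-based interpolation: with the oblique projector
`P = V (Wᵀ(A-σE)V)⁻¹ Wᵀ (A-σE)`, the interpolation error factors through `I - P`; in
particular, if `(A - σE)⁻¹ B r ∈ range(V)` then `(I - P)(A - σE)⁻¹ B r = 0` and hence
`(G(σ) - G_r(σ)) r = 0`. -/
theorem interpolation_error_factorization
    {n m p q : ℕ}
    (A E : Matrix (Fin n) (Fin n) ℂ)
    (B : Matrix (Fin n) (Fin m) ℂ) (C : Matrix (Fin p) (Fin n) ℂ)
    (V W : Matrix (Fin n) (Fin q) ℂ)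
    (σ : ℂ) (r : Fin m → ℂ)
    (hfull : IsUnit (A - σ • E))
    (hred : IsUnit (Wᵀ * (A - σ • E) * V))
    (P : Matrix (Fin n) (Fin n) ℂ)
    (hP : P = V * (Wᵀ * (A - σ • E) * V)⁻¹ * Wᵀ * (A - σ • E))
    (G Gr : Matrix (Fin p) (Fin m) ℂ)
    (hG : G = C * (σ • E - A)⁻¹ * B)
    (hGr : Gr = (C * V) * (σ • (Wᵀ * E * V) - Wᵀ * A * V)⁻¹ * (Wᵀ * B)) :
    G - Gr = ((-1 : ℂ) ^ 2) •
        (C * (σ • E - A)⁻¹ * (1 - (A - σ • E) * P * (A - σ • E)⁻¹) * (A - σ • E) *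
          (1 - P) * (A - σ • E)⁻¹ * B)
    ∧ ((∃ z : Fin q → ℂ, V *ᵥ z = (A - σ • E)⁻¹ *ᵥ (B *ᵥ r)) →
        (1 - P) *ᵥ ((A - σ • E)⁻¹ *ᵥ (B *ᵥ r)) = 0 ∧ (G - Gr) *ᵥ r = 0) := by
  set M : Matrix (Fin n) (Fin n) ℂ := A - σ • E with hM
  set K : Matrix (Fin q) (Fin q) ℂ := (Wᵀ * M * V)⁻¹ with hK
  have hMd : IsUnit M.det := (Matrix.isUnit_iff_isUnit_det M).mp hfull
  have hRd : IsUnit (Wᵀ * M * V).det :=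
    (Matrix.isUnit_iff_isUnit_det _).mp hred
  have hM1 : M * M⁻¹ = 1 := Matrix.mul_nonsing_inv M hMd
  have hM2 : M⁻¹ * M = 1 := Matrix.nonsing_inv_mul M hMd
  have hK1 : (Wᵀ * M * V) * K = 1 := by rw [hK]; exact Matrix.mul_nonsing_inv _ hRd
  have hK2 : K * (Wᵀ * M * V) = 1 := by rw [hK]; exact Matrix.nonsing_inv_mul _ hRd
  have hneg : (σ • E - A)⁻¹ = -M⁻¹ := by
    have h1 : σ • E - A = -M := by rw [hM, neg_sub]
    rw [h1]
    apply Matrix.inv_eq_right_inv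
    simp [hM1]
  have hred_eq : σ • (Wᵀ * E * V) - Wᵀ * A * V = -(Wᵀ * M * V) := by
    rw [hM]
    simp [Matrix.mul_sub, Matrix.sub_mul, Matrix.mul_smul, Matrix.smul_mul,
      Matrix.mul_assoc]
  have hnegr : (σ • (Wᵀ * E * V) - Wᵀ * A * V)⁻¹ = -K := by
    rw [hred_eq]
    apply Matrix.inv_eq_right_inv
    simp [hK1]
  clear_value M K
  clear hK hM
  -- P fixes range(V); P is idempotent; P * M⁻¹ = V * K * Wᵀ
  have hPV : P * V = V := by
    rw [hP]
    calc V * K * Wᵀ * M * V = V * (K * (Wᵀ * M * V)) := by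
          simp only [Matrix.mul_assoc]
      _ = V := by rw [hK2, Matrix.mul_one]
  have hPP : P * P = P := by
    conv_lhs => rw [show P * P = P * (V * K * Wᵀ * M) from by rw [← hP]]
    calc P * (V * K * Wᵀ * M) = (P * V) * (K * Wᵀ * M) := by
          simp only [Matrix.mul_assoc]
      _ = V * (K * Wᵀ * M) := by rw [hPV]
      _ = P := by rw [hP]; simp only [Matrix.mul_assoc]
  have hPMinv : P * M⁻¹ = V * K * Wᵀ := by
    rw [hP]
    calc V * K * Wᵀ * M * M⁻¹ = V * K * Wᵀ * (M * M⁻¹) := by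
          simp only [Matrix.mul_assoc]
      _ = V * K * Wᵀ := by rw [hM1, Matrix.mul_one]
  -- the core identity
  have hdiff : G - Gr = -(C * (1 - P) * M⁻¹ * B) := by
    rw [hG, hGr, hneg, hnegr]
    have h2 : C * (1 - P) * M⁻¹ * B = C * M⁻¹ * B - C * V * K * (Wᵀ * B) := by
      rw [Matrix.mul_sub, Matrix.mul_one, Matrix.sub_mul, Matrix.sub_mul]
      congr 1
      calc C * P * M⁻¹ * B = C * (P * M⁻¹) * B := by
            simp only [Matrix.mul_assoc]
        _ = C * V * K * (Wᵀ * B) := by rw [hPMinv]; simp only [Matrix.mul_assoc]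
    rw [h2]
    simp only [Matrix.mul_neg, Matrix.neg_mul]
    abel
  have hfact : (1 - M * P * M⁻¹) * M = M * (1 - P) := by
    rw [Matrix.sub_mul, Matrix.one_mul, Matrix.mul_sub, Matrix.mul_one]
    congr 1
    calc M * P * M⁻¹ * M = M * P * (M⁻¹ * M) := by simp only [Matrix.mul_assoc]
      _ = M * P := by rw [hM2, Matrix.mul_one]
  constructor
  · rw [hdiff, hneg]
    have h1P : (1 - P) * (1 - P) = 1 - P := by
      rw [Matrix.sub_mul, Matrix.one_mul, Matrix.mul_sub, Matrix.mul_one, hPP]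
      abel
    calc -(C * (1 - P) * M⁻¹ * B)
        = C * -M⁻¹ * ((1 - M * P * M⁻¹) * M) * (1 - P) * M⁻¹ * B := by
          rw [hfact]
          have h3 : C * -M⁻¹ * (M * (1 - P)) = -(C * (1 - P)) := by
            rw [Matrix.mul_neg, Matrix.neg_mul]
            congr 1
            calc C * M⁻¹ * (M * (1 - P)) = C * (M⁻¹ * M) * (1 - P) := by
                  simp only [Matrix.mul_assoc]
              _ = C * (1 - P) := by rw [hM2, Matrix.mul_one]
          rw [h3, Matrix.neg_mul, Matrix.neg_mul, Matrix.neg_mul]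
          rw [show C * (1 - P) * (1 - P) = C * ((1 - P) * (1 - P)) from by
            simp only [Matrix.mul_assoc], h1P]
      _ = ((-1 : ℂ) ^ 2) •
          (C * -M⁻¹ * (1 - M * P * M⁻¹) * M * (1 - P) * M⁻¹ * B) := by
          simp only [Matrix.mul_assoc]
          norm_num
  · rintro ⟨z, hz⟩
    have hx : (1 - P) *ᵥ (M⁻¹ *ᵥ (B *ᵥ r)) = 0 := by
      rw [← hz, Matrix.sub_mulVec, Matrix.one_mulVec, Matrix.mulVec_mulVec,
        hPV, sub_self]
    refine ⟨hx, ?_⟩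
    rw [hdiff]
    have h4 : (C * (1 - P) * M⁻¹ * B) *ᵥ r
        = C *ᵥ ((1 - P) *ᵥ (M⁻¹ *ᵥ (B *ᵥ r))) := by
      simp only [Matrix.mulVec_mulVec, Matrix.mul_assoc]
    rw [Matrix.neg_mulVec, h4, hx]
    simp
end
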